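/- Let M_2 ∈ ℝ^{d×d} be symmetric positive semidefinite of rank k with k-th largest singular value ς_k[M_2] > 0, and let M̂_2 ∈ ℝ^{d×d} be symmetric with Err := ‖M̂_2 − M_2‖₂/ς_k[M_2] ≤ 1/3. Let U, Û ∈ ℝ^{d×k} be matrices of orthonormal left singular vectors of M_2, M̂_2 corresponding to their k largest singular values, and let S, Ŝ be the corresponding diagonal matrices of singular values. Then: (1) (1 + Err)·S ⪰ Ûᵀ M̂_2 Û = Ŝ ⪰ (1 − Err)·S ≻ 0; (2) ς_k[Ûᵀ U] ≥ √(1 − (9/4)Err²) > 0; (3) ς_k[Ûᵀ M_2 Û] ≥ (1 − (9/4)Err²) ς_k[M_2] > 0; (4) ‖(I − ÛÛᵀ)UUᵀ‖₂ ≤ (3/2)Err. -/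

import Mathlib

open Matrix
open scoped BigOperators

/-- Spectral norm (ℓ² operator norm) of a real matrix. -/
noncomputable def spec {m n : ℕ} (M : Matrix (Fin m) (Fin n) ℝ) : ℝ :=
  ‖LinearMap.toContinuousLinearMap (Matrix.toEuclideanLin M)‖

/-- `t`-th largest entry (1-indexed) of a tuple of reals. -/
noncomputable def kthLargest {d : ℕ} (f : Fin d → ℝ) (t : ℕ) : ℝ :=
  if h : d - t < d then f (Tuple.sort f ⟨d - t, h⟩) else 0

/-- `t`-th largest singular value (1-indexed) of a real matrix. -/
noncomputable def kthSV {m n : ℕ} (M : Matrix (Fin m) (Fin n) ℝ) (t : ℕ) : ℝ :=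
  Real.sqrt (kthLargest (Matrix.isHermitian_conjTranspose_mul_self M).eigenvalues t)

section WedinAux
open scoped Matrix.Norms.L2Operator

variable {m n l : ℕ}

noncomputable def ev {n : ℕ} (x : Fin n → ℝ) : EuclideanSpace ℝ (Fin n) :=
  (WithLp.equiv 2 (Fin n → ℝ)).symm x

lemma spec_eq_norm (M : Matrix (Fin m) (Fin n) ℝ) : spec M = ‖M‖ := rfl

lemma inner_ev (x y : Fin n → ℝ) : inner ℝ (ev x) (ev y) = x ⬝ᵥ y := by
  simp [ev, PiLp.inner_apply, dotProduct, RCLike.inner_apply, mul_comm]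

lemma norm_ev_sq (x : Fin n → ℝ) : ‖ev x‖ ^ 2 = x ⬝ᵥ x := by
  rw [← inner_ev x x]; exact (real_inner_self_eq_norm_sq _).symm

lemma norm_mulVec_le (M : Matrix (Fin m) (Fin n) ℝ) (x : Fin n → ℝ) :
    ‖ev (M *ᵥ x)‖ ≤ spec M * ‖ev x‖ := by
  have h := (LinearMap.toContinuousLinearMap (Matrix.toEuclideanLin M)).le_opNorm (ev x)
  simpa [ev, spec, Matrix.toEuclideanLin_apply_piLp_toLp] using h

lemma spec_le_bound {M : Matrix (Fin m) (Fin n) ℝ} {c : ℝ} (h0 : 0 ≤ c)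
    (h : ∀ x : Fin n → ℝ, ‖ev (M *ᵥ x)‖ ≤ c * ‖ev x‖) : spec M ≤ c := by
  apply ContinuousLinearMap.opNorm_le_bound _ h0
  intro y
  simpa [ev, Matrix.toEuclideanLin_apply] using h (WithLp.equiv 2 (Fin n → ℝ) y)

lemma spec_nonneg (M : Matrix (Fin m) (Fin n) ℝ) : 0 ≤ spec M := norm_nonneg _

lemma spec_mul_le (A : Matrix (Fin m) (Fin n) ℝ) (B : Matrix (Fin n) (Fin l) ℝ) :
    spec (A * B) ≤ spec A * spec B := Matrix.l2_opNorm_mul A B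

lemma spec_neg (M : Matrix (Fin m) (Fin n) ℝ) : spec (-M) = spec M := by
  rw [spec_eq_norm, spec_eq_norm]; exact norm_neg M

lemma spec_transpose (M : Matrix (Fin m) (Fin n) ℝ) : spec Mᵀ = spec M := by
  have h : Mᵀ = Mᴴ := by ext i j; simp [Matrix.conjTranspose_apply]
  rw [spec_eq_norm, spec_eq_norm, h]
  exact Matrix.l2_opNorm_conjTranspose M

lemma norm_ev_eq_of_isometry {V : Matrix (Fin m) (Fin n) ℝ} (hV : Vᵀ * V = 1)
    (x : Fin n → ℝ) : ‖ev (V *ᵥ x)‖ = ‖ev x‖ := by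
  have h1 : (V *ᵥ x) ⬝ᵥ (V *ᵥ x) = x ⬝ᵥ x := by
    rw [Matrix.dotProduct_mulVec, ← Matrix.vecMul_transpose, Matrix.vecMul_vecMul,
      ← Matrix.mulVec_transpose, hV]
    simp
  have := norm_ev_sq (V *ᵥ x)
  rw [h1, ← norm_ev_sq x] at this
  exact (sq_eq_sq₀ (norm_nonneg _) (norm_nonneg _)).mp this

lemma spec_le_one_of_isometry {V : Matrix (Fin m) (Fin n) ℝ} (hV : Vᵀ * V = 1) :
    spec V ≤ 1 := by
  apply spec_le_bound zero_le_one
  intro x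
  rw [norm_ev_eq_of_isometry hV, one_mul]

lemma dot_self_nonneg (x : Fin n → ℝ) : 0 ≤ x ⬝ᵥ x :=
  Finset.sum_nonneg fun i _ => mul_self_nonneg _

lemma norm_ev_eq_sqrt (x : Fin n → ℝ) : ‖ev x‖ = Real.sqrt (x ⬝ᵥ x) := by
  rw [← norm_ev_sq, Real.sqrt_sq (norm_nonneg _)]

lemma norm_mul_le_of_bound {f y : Fin n → ℝ} {c : ℝ} (hc : 0 ≤ c)
    (h : ∀ i, y i ≠ 0 → |f i| ≤ c) : ‖ev (f * y)‖ ≤ c * ‖ev y‖ := by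
  rw [norm_ev_eq_sqrt, norm_ev_eq_sqrt]
  rw [show c * Real.sqrt (y ⬝ᵥ y) = Real.sqrt (c ^ 2 * (y ⬝ᵥ y)) by
    rw [Real.sqrt_mul (sq_nonneg c), Real.sqrt_sq hc]]
  apply Real.sqrt_le_sqrt
  unfold dotProduct
  rw [Finset.mul_sum]
  apply Finset.sum_le_sum
  intro i _
  simp only [Pi.mul_apply]
  by_cases hy : y i = 0
  · simp [hy]
  · have hfi := h i hy
    have : (f i * y i) * (f i * y i) = (f i)^2 * (y i * y i) := by ring
    rw [this]
    apply mul_le_mul_of_nonneg_right _ (mul_self_nonneg _)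
    calc (f i)^2 = |f i|^2 := (sq_abs _).symm
    _ ≤ c ^ 2 := by exact pow_le_pow_left₀ (abs_nonneg _) hfi 2

lemma norm_mul_ge_of_bound {f y : Fin n → ℝ} {c : ℝ} (hc : 0 ≤ c)
    (h : ∀ i, y i ≠ 0 → c ≤ |f i|) : c * ‖ev y‖ ≤ ‖ev (f * y)‖ := by
  rw [norm_ev_eq_sqrt, norm_ev_eq_sqrt]
  rw [show c * Real.sqrt (y ⬝ᵥ y) = Real.sqrt (c ^ 2 * (y ⬝ᵥ y)) by
    rw [Real.sqrt_mul (sq_nonneg c), Real.sqrt_sq hc]]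
  apply Real.sqrt_le_sqrt
  unfold dotProduct
  rw [Finset.mul_sum]
  apply Finset.sum_le_sum
  intro i _
  simp only [Pi.mul_apply]
  by_cases hy : y i = 0
  · simp [hy]
  · have hfi := h i hy
    have : (f i * y i) * (f i * y i) = (f i)^2 * (y i * y i) := by ring
    rw [this]
    apply mul_le_mul_of_nonneg_right _ (mul_self_nonneg _)
    calc c^2 ≤ |f i|^2 := by exact pow_le_pow_left₀ hc hfi 2
    _ = (f i)^2 := sq_abs _

lemma diagonal_mulVec_eq (f y : Fin n → ℝ) : Matrix.diagonal f *ᵥ y = f * y := by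
  funext i; simp [Matrix.mulVec_diagonal]

lemma spec_diagonal_le {f : Fin n → ℝ} {c : ℝ} (hc : 0 ≤ c) (h : ∀ i, |f i| ≤ c) :
    spec (Matrix.diagonal f) ≤ c := by
  apply spec_le_bound hc
  intro x
  rw [diagonal_mulVec_eq]
  exact norm_mul_le_of_bound hc fun i _ => h i

lemma dot_mulVec_self (A : Matrix (Fin m) (Fin n) ℝ) (x y : Fin n → ℝ) :
    (A *ᵥ x) ⬝ᵥ (A *ᵥ y) = x ⬝ᵥ ((Aᵀ * A) *ᵥ y) := by
  conv_rhs => rw [← Matrix.mulVec_mulVec, Matrix.dotProduct_mulVec, Matrix.vecMul_transpose]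

lemma dot_conj (A : Matrix (Fin m) (Fin n) ℝ) (B : Matrix (Fin m) (Fin m) ℝ)
    (x y : Fin n → ℝ) :
    x ⬝ᵥ ((Aᵀ * B * A) *ᵥ y) = (A *ᵥ x) ⬝ᵥ (B *ᵥ (A *ᵥ y)) := by
  conv_lhs => rw [Matrix.mul_assoc, ← Matrix.mulVec_mulVec, Matrix.dotProduct_mulVec,
    Matrix.vecMul_transpose]
  rw [Matrix.mulVec_mulVec]

lemma abs_dot_mulVec_le (M : Matrix (Fin n) (Fin n) ℝ) (x : Fin n → ℝ) :
    |x ⬝ᵥ (M *ᵥ x)| ≤ spec M * (x ⬝ᵥ x) := by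
  have h1 : x ⬝ᵥ (M *ᵥ x) = inner ℝ (ev x) (ev (M *ᵥ x)) := (inner_ev _ _).symm
  rw [h1]
  calc |inner ℝ (ev x) (ev (M *ᵥ x))| ≤ ‖ev x‖ * ‖ev (M *ᵥ x)‖ := abs_real_inner_le_norm _ _
  _ ≤ ‖ev x‖ * (spec M * ‖ev x‖) :=
      mul_le_mul_of_nonneg_left (norm_mulVec_le M x) (norm_nonneg _)
  _ = spec M * (x ⬝ᵥ x) := by rw [← norm_ev_sq]; ring

lemma eig_lower {H : Matrix (Fin n) (Fin n) ℝ} (hH : H.IsHermitian) {c : ℝ}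
    (h : ∀ x : Fin n → ℝ, c * (x ⬝ᵥ x) ≤ x ⬝ᵥ (H *ᵥ x)) (i : Fin n) :
    c ≤ hH.eigenvalues i := by
  set v : EuclideanSpace ℝ (Fin n) := hH.eigenvectorBasis i with hv
  have hmv : H *ᵥ ⇑v = hH.eigenvalues i • ⇑v := hH.mulVec_eigenvectorBasis i
  have hnorm : ‖v‖ = 1 := hH.eigenvectorBasis.orthonormal.1 i
  have hdot : (⇑v : Fin n → ℝ) ⬝ᵥ ⇑v = 1 := by
    have hev : ev (⇑v : Fin n → ℝ) = v := rfl
    rw [← norm_ev_sq, hev, hnorm]; norm_num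
  have := h ⇑v
  rw [hmv, dotProduct_smul, hdot, smul_eq_mul, mul_one, mul_one] at this
  exact this

lemma eig_upper {H : Matrix (Fin n) (Fin n) ℝ} (hH : H.IsHermitian) {c : ℝ}
    (h : ∀ x : Fin n → ℝ, x ⬝ᵥ (H *ᵥ x) ≤ c * (x ⬝ᵥ x)) (i : Fin n) :
    hH.eigenvalues i ≤ c := by
  set v : EuclideanSpace ℝ (Fin n) := hH.eigenvectorBasis i with hv
  have hmv : H *ᵥ ⇑v = hH.eigenvalues i • ⇑v := hH.mulVec_eigenvectorBasis i
  have hnorm : ‖v‖ = 1 := hH.eigenvectorBasis.orthonormal.1 i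
  have hdot : (⇑v : Fin n → ℝ) ⬝ᵥ ⇑v = 1 := by
    have hev : ev (⇑v : Fin n → ℝ) = v := rfl
    rw [← norm_ev_sq, hev, hnorm]; norm_num
  have := h ⇑v
  rw [hmv, dotProduct_smul, hdot, smul_eq_mul, mul_one, mul_one] at this
  exact this

lemma conjTranspose_eq_transpose (M : Matrix (Fin m) (Fin n) ℝ) : Mᴴ = Mᵀ := by
  ext i j; simp [Matrix.conjTranspose_apply]

lemma kthSV_k_lower {m k : ℕ} (hk : 0 < k) (M : Matrix (Fin m) (Fin k) ℝ) {c : ℝ}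
    (h : ∀ x : Fin k → ℝ, c * (x ⬝ᵥ x) ≤ (M *ᵥ x) ⬝ᵥ (M *ᵥ x)) :
    Real.sqrt c ≤ kthSV M k := by
  unfold kthSV kthLargest
  rw [dif_pos (show k - k < k by omega)]
  apply Real.sqrt_le_sqrt
  apply eig_lower
  intro x
  rw [conjTranspose_eq_transpose, ← dot_mulVec_self]
  exact h x

lemma quad_to_normsq {M : Matrix (Fin n) (Fin n) ℝ} {c : ℝ} (hc : 0 ≤ c)
    (h : ∀ x : Fin n → ℝ, c * (x ⬝ᵥ x) ≤ x ⬝ᵥ (M *ᵥ x)) (x : Fin n → ℝ) :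
    c ^ 2 * (x ⬝ᵥ x) ≤ (M *ᵥ x) ⬝ᵥ (M *ᵥ x) := by
  by_cases hx : x = 0
  · simp [hx]
  · have ht : 0 < x ⬝ᵥ x :=
      lt_of_le_of_ne (dot_self_nonneg x) (Ne.symm (mt dotProduct_self_eq_zero.mp hx))
    have hcs : (x ⬝ᵥ (M *ᵥ x)) * (x ⬝ᵥ (M *ᵥ x)) ≤ (x ⬝ᵥ x) * ((M *ᵥ x) ⬝ᵥ (M *ᵥ x)) := by
      have := real_inner_mul_inner_self_le (ev x) (ev (M *ᵥ x))
      rwa [inner_ev, inner_ev, inner_ev] at this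
    have h1 := h x
    nlinarith [dot_self_nonneg (M *ᵥ x), mul_nonneg hc ht.le]

lemma ev_add (a b : Fin n → ℝ) : ev (a + b) = ev a + ev b := rfl

lemma norm_ev_pos {y : Fin n → ℝ} (hy : y ≠ 0) : 0 < ‖ev y‖ := by
  have h2 : y ⬝ᵥ y ≠ 0 := fun h => hy (dotProduct_self_eq_zero.mp h)
  have h3 : ‖ev y‖ ^ 2 ≠ 0 := by rw [norm_ev_sq]; exact h2
  rcases (norm_nonneg (ev y)).lt_or_eq with h | h
  · exact h
  · exact absurd (by rw [← h]; ring) h3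

lemma weyl {d : ℕ} (A B PA QA PB QB : Matrix (Fin d) (Fin d) ℝ) (sA sB : Fin d → ℝ)
    (hPA : PAᵀ * PA = 1) (hQA : QAᵀ * QA = 1)
    (hPB : PBᵀ * PB = 1) (hQB : QBᵀ * QB = 1)
    (hA : A = PA * Matrix.diagonal sA * QAᵀ) (hB : B = PB * Matrix.diagonal sB * QBᵀ)
    (hsA : Antitone sA) (hsA0 : ∀ i, 0 ≤ sA i) (hsB : Antitone sB) (hsB0 : ∀ i, 0 ≤ sB i)
    (j : Fin d) : sB j ≤ sA j + spec (B - A) := by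
  classical
  set C : Matrix (Fin d) (Fin d) ℝ :=
    Matrix.of (fun i l => if (i : ℕ) < (j : ℕ) then (if l = i then (1:ℝ) else 0)
      else if (j : ℕ) < (i : ℕ) then (QBᵀ * QA) i l else 0) with hC
  have hdet : C.det = 0 := by
    apply Matrix.det_eq_zero_of_row_eq_zero j
    intro l
    simp [hC]
  obtain ⟨y, hy0, hCy⟩ := Matrix.exists_mulVec_eq_zero_iff.mpr hdet
  have hy_low : ∀ i : Fin d, (i : ℕ) < (j : ℕ) → y i = 0 := by
    intro i hi
    have h1 := congrFun hCy i
    simp only [hC, Matrix.mulVec, dotProduct, Matrix.of_apply, ite_mul, one_mul, zero_mul,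
      Finset.sum_ite_eq', Finset.mem_univ, if_true, Pi.zero_apply, Finset.sum_ite_irrel,
      Finset.sum_const_zero] at h1
    rwa [if_pos hi] at h1
  have hz_high : ∀ i : Fin d, (j : ℕ) < (i : ℕ) → ((QBᵀ * QA) *ᵥ y) i = 0 := by
    intro i hi
    have h1 := congrFun hCy i
    simp only [hC, Matrix.mulVec, dotProduct, Matrix.of_apply, ite_mul, one_mul, zero_mul,
      Finset.sum_ite_eq', Finset.mem_univ, if_true, Pi.zero_apply, Finset.sum_ite_irrel,
      Finset.sum_const_zero] at h1
    rwa [if_neg (by omega), if_pos hi] at h1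
  set x := QA *ᵥ y with hx
  have hnx : ‖ev x‖ = ‖ev y‖ := norm_ev_eq_of_isometry hQA y
  have hpos : 0 < ‖ev x‖ := hnx ▸ norm_ev_pos hy0
  -- A side
  have hAx : A *ᵥ x = PA *ᵥ (sA * y) := by
    rw [hA, hx, Matrix.mulVec_mulVec, Matrix.mul_assoc (PA * Matrix.diagonal sA), hQA,
      Matrix.mul_one, ← Matrix.mulVec_mulVec, diagonal_mulVec_eq]
  have hAbound : ‖ev (A *ᵥ x)‖ ≤ sA j * ‖ev x‖ := by
    rw [hAx, norm_ev_eq_of_isometry hPA, hnx]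
    apply norm_mul_le_of_bound (hsA0 j)
    intro i hyi
    have hij : (j : ℕ) ≤ (i : ℕ) := by
      by_contra hcon
      exact hyi (hy_low i (by omega))
    rw [abs_of_nonneg (hsA0 i)]
    exact hsA (by exact hij)
  -- B side
  set cv := (QBᵀ * QA) *ᵥ y with hcv
  have hBx : B *ᵥ x = PB *ᵥ (sB * cv) := by
    rw [hB, hx, Matrix.mulVec_mulVec, Matrix.mul_assoc (PB * Matrix.diagonal sB),
      ← Matrix.mulVec_mulVec y (PB * Matrix.diagonal sB) (QBᵀ * QA),
      ← Matrix.mulVec_mulVec ((QBᵀ * QA) *ᵥ y) PB (Matrix.diagonal sB),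
      diagonal_mulVec_eq]
  have hncv : ‖ev cv‖ = ‖ev x‖ := by
    have h1 : cv = QBᵀ *ᵥ x := by rw [hcv, hx, Matrix.mulVec_mulVec]
    have h2 : (QBᵀ)ᵀ * QBᵀ = 1 := by
      rw [Matrix.transpose_transpose]
      exact mul_eq_one_comm.mp hQB
    rw [h1]
    exact norm_ev_eq_of_isometry h2 x
  have hBbound : sB j * ‖ev x‖ ≤ ‖ev (B *ᵥ x)‖ := by
    rw [hBx, norm_ev_eq_of_isometry hPB, ← hncv]
    apply norm_mul_ge_of_bound (hsB0 j)
    intro i hci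
    have hij : (i : ℕ) ≤ (j : ℕ) := by
      by_contra hcon
      exact hci (hz_high i (by omega))
    rw [abs_of_nonneg (hsB0 i)]
    exact hsB (by exact hij)
  -- triangle
  have htri : ‖ev (B *ᵥ x)‖ ≤ spec (B - A) * ‖ev x‖ + sA j * ‖ev x‖ := by
    have h1 : B *ᵥ x = (B - A) *ᵥ x + A *ᵥ x := by
      rw [Matrix.sub_mulVec]; abel
    rw [h1, ev_add]
    calc ‖ev ((B - A) *ᵥ x) + ev (A *ᵥ x)‖ ≤ ‖ev ((B - A) *ᵥ x)‖ + ‖ev (A *ᵥ x)‖ :=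
        norm_add_le _ _
    _ ≤ spec (B - A) * ‖ev x‖ + sA j * ‖ev x‖ :=
        add_le_add (norm_mulVec_le _ _) hAbound
  have hfinal : sB j * ‖ev x‖ ≤ (sA j + spec (B - A)) * ‖ev x‖ := by
    calc sB j * ‖ev x‖ ≤ ‖ev (B *ᵥ x)‖ := hBbound
    _ ≤ spec (B - A) * ‖ev x‖ + sA j * ‖ev x‖ := htri
    _ = (sA j + spec (B - A)) * ‖ev x‖ := by ring
  exact le_of_mul_le_mul_right hfinal hpos

lemma kthSV_nonneg {m n : ℕ} (M : Matrix (Fin m) (Fin n) ℝ) (t : ℕ) : 0 ≤ kthSV M t :=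
  Real.sqrt_nonneg _

lemma kthSV_antitone {m n : ℕ} (M : Matrix (Fin m) (Fin n) ℝ) {t t' : ℕ} (h1 : 1 ≤ t)
    (h : t ≤ t') (hn : 0 < n) : kthSV M t' ≤ kthSV M t := by
  unfold kthSV kthLargest
  rw [dif_pos (show n - t < n by omega), dif_pos (show n - t' < n by omega)]
  apply Real.sqrt_le_sqrt
  exact Tuple.monotone_sort ((Matrix.isHermitian_conjTranspose_mul_self M).eigenvalues)
    (show (⟨n - t', by omega⟩ : Fin n) ≤ ⟨n - t, by omega⟩ from by
      rw [Fin.mk_le_mk]; omega)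

lemma svd_col_eq {d : ℕ} {A PA QA : Matrix (Fin d) (Fin d) ℝ} {sA : Fin d → ℝ}
    (hA : A = PA * Matrix.diagonal sA * QAᵀ) (hAsym : Aᵀ = A)
    (hQA : QAᵀ * QA = 1) (hPA : PAᵀ * PA = 1) {c : ℝ}
    (hquad : ∀ x : Fin d → ℝ, -c * (x ⬝ᵥ x) ≤ x ⬝ᵥ (A *ᵥ x))
    (j : Fin d) (hc : c < sA j) :
    (fun i => QA i j) = (fun i => PA i j) := by
  classical
  have hA' : A = QA * Matrix.diagonal sA * PAᵀ := by
    rw [← hAsym]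
    nth_rewrite 1 [hA]
    rw [Matrix.transpose_mul, Matrix.transpose_mul, Matrix.transpose_transpose,
      Matrix.diagonal_transpose, Matrix.mul_assoc]
  have key : ∀ (R1 R2 : Matrix (Fin d) (Fin d) ℝ), A = R1 * Matrix.diagonal sA * R2ᵀ →
      R2ᵀ * R2 = 1 → A *ᵥ (fun i => R2 i j) = fun i => sA j * R1 i j := by
    intro R1 R2 h1 h2
    have hcol : (fun i => R2 i j) = R2 *ᵥ Pi.single j 1 := by
      funext i; simp [Matrix.mulVec_single]
    rw [hcol, h1, Matrix.mulVec_mulVec, Matrix.mul_assoc (R1 * Matrix.diagonal sA), h2,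
      Matrix.mul_one, ← Matrix.mulVec_mulVec, Matrix.diagonal_mulVec_single,
      mul_one]
    funext i
    simp [Matrix.mulVec_single, mul_comm]
  have h1 : A *ᵥ (fun i => QA i j) = fun i => sA j * PA i j := key PA QA hA hQA
  have h2 : A *ᵥ (fun i => PA i j) = fun i => sA j * QA i j := key QA PA hA' hPA
  set u : Fin d → ℝ := (fun i => PA i j) - (fun i => QA i j) with hu
  have h3 : A *ᵥ u = (-sA j) • u := by
    rw [hu, Matrix.mulVec_sub, h1, h2]
    funext i
    simp only [Pi.sub_apply, Pi.smul_apply, smul_eq_mul]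
    ring
  have h4 : u ⬝ᵥ (A *ᵥ u) = (-sA j) * (u ⬝ᵥ u) := by
    rw [h3, dotProduct_smul, smul_eq_mul]
  have h5 := hquad u
  rw [h4] at h5
  have h6 : u ⬝ᵥ u = 0 := by
    have := dot_self_nonneg u
    nlinarith
  have h7 : u = 0 := dotProduct_self_eq_zero.mp h6
  have := sub_eq_zero.mp h7
  exact this.symm

lemma dot_mul_ge {f z : Fin n → ℝ} {c : ℝ} (h : ∀ i, c ≤ f i) :
    c * (z ⬝ᵥ z) ≤ z ⬝ᵥ (f * z) := by
  unfold dotProduct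
  rw [Finset.mul_sum]
  apply Finset.sum_le_sum
  intro i _
  simp only [Pi.mul_apply]
  nlinarith [mul_self_nonneg (z i), h i]

lemma sum_castLE {d k : ℕ} (hdk : k ≤ d) (g : Fin d → ℝ) :
    ∑ j : Fin k, g (Fin.castLE hdk j) = ∑ i : Fin d, (if (i : ℕ) < k then g i else 0) := by
  classical
  set G : ℕ → ℝ := fun n => if h : n < d then (if n < k then g ⟨n, h⟩ else 0) else 0 with hG
  calc ∑ j : Fin k, g (Fin.castLE hdk j) = ∑ j : Fin k, G (j : ℕ) := by
        apply Finset.sum_congr rfl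
        intro j _
        have hj : (j : ℕ) < d := lt_of_lt_of_le j.isLt hdk
        rw [hG]
        simp only [hj, dif_pos, j.isLt, if_pos]
        rfl
  _ = ∑ i ∈ Finset.range k, G i := Fin.sum_univ_eq_sum_range G k
  _ = ∑ i ∈ Finset.range d, G i := by
        apply Finset.sum_subset (Finset.range_subset_range.mpr hdk)
        intro x hx hnx
        simp only [Finset.mem_range] at hx hnx
        rw [hG]
        simp [hnx]
  _ = ∑ i : Fin d, G (i : ℕ) := (Fin.sum_univ_eq_sum_range G d).symm
  _ = ∑ i : Fin d, (if (i : ℕ) < k then g i else 0) := by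
        apply Finset.sum_congr rfl
        intro i _
        rw [hG]
        simp [i.isLt]

lemma slice_repr {d k : ℕ} (hdk : k ≤ d) (P : Matrix (Fin d) (Fin d) ℝ)
    (W : Matrix (Fin d) (Fin k) ℝ)
    (hW : W = Matrix.of fun i (j : Fin k) => P i (Fin.castLE hdk j))
    (w : Fin k → ℝ) (wd : Fin d → ℝ) (hw : ∀ j : Fin k, w j = wd (Fin.castLE hdk j))
    (hwd : ∀ i : Fin d, k ≤ (i : ℕ) → wd i = 0) :
    W * Matrix.diagonal w * Wᵀ = P * Matrix.diagonal wd * Pᵀ := by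
  ext i l
  have hL : (W * Matrix.diagonal w * Wᵀ) i l = ∑ j : Fin k, W i j * w j * W l j := by
    rw [Matrix.mul_apply]
    apply Finset.sum_congr rfl
    intro j _
    rw [Matrix.mul_diagonal, Matrix.transpose_apply]
  have hR : (P * Matrix.diagonal wd * Pᵀ) i l = ∑ a : Fin d, P i a * wd a * P l a := by
    rw [Matrix.mul_apply]
    apply Finset.sum_congr rfl
    intro a _
    rw [Matrix.mul_diagonal, Matrix.transpose_apply]
  rw [hL, hR]
  have h1 : ∀ j : Fin k, W i j * w j * W l j
      = (fun a => P i a * wd a * P l a) (Fin.castLE hdk j) := by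
    intro j
    rw [hW, hw]
    rfl
  rw [Finset.sum_congr rfl (fun j _ => h1 j), sum_castLE hdk (fun a => P i a * wd a * P l a)]
  apply Finset.sum_congr rfl
  intro a _
  by_cases ha : (a : ℕ) < k
  · rw [if_pos ha]
  · rw [if_neg ha, hwd a (le_of_not_gt ha), mul_zero, zero_mul]

lemma svd_sym_repr {d : ℕ} {A P Q : Matrix (Fin d) (Fin d) ℝ} {s : Fin d → ℝ}
    (hA : A = P * Matrix.diagonal s * Qᵀ)
    (hcol : ∀ a : Fin d, s a ≠ 0 → (fun i => Q i a) = fun i => P i a) :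
    A = P * Matrix.diagonal s * Pᵀ := by
  rw [hA]
  ext i l
  have hgen : ∀ R : Matrix (Fin d) (Fin d) ℝ,
      (P * Matrix.diagonal s * Rᵀ) i l = ∑ a : Fin d, P i a * s a * R l a := by
    intro R
    rw [Matrix.mul_apply]
    apply Finset.sum_congr rfl
    intro a _
    rw [Matrix.mul_diagonal, Matrix.transpose_apply]
  rw [hgen Q, hgen P]
  apply Finset.sum_congr rfl
  intro a _
  by_cases ha : s a = 0
  · rw [ha, mul_zero, zero_mul, zero_mul]
  · rw [congrFun (hcol a ha) l]

lemma svd_mulVec_col {d : ℕ} {A R1 R2 : Matrix (Fin d) (Fin d) ℝ} {s : Fin d → ℝ}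
    (h1 : A = R1 * Matrix.diagonal s * R2ᵀ) (h2 : R2ᵀ * R2 = 1) (j : Fin d) :
    A *ᵥ (fun i => R2 i j) = fun i => s j * R1 i j := by
  have hcol : (fun i => R2 i j) = R2 *ᵥ Pi.single j 1 := by
    funext i; simp [Matrix.mulVec_single]
  rw [hcol, h1, Matrix.mulVec_mulVec, Matrix.mul_assoc (R1 * Matrix.diagonal s), h2,
    Matrix.mul_one, ← Matrix.mulVec_mulVec, Matrix.diagonal_mulVec_single, mul_one]
  funext i
  simp [Matrix.mulVec_single, mul_comm]

lemma spec_mul_le_of_le {m n l : ℕ} {A : Matrix (Fin m) (Fin n) ℝ} {B : Matrix (Fin n) (Fin l) ℝ}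
    {a b : ℝ} (hA : spec A ≤ a) (hB : spec B ≤ b) (hb : 0 ≤ b) :
    spec (A * B) ≤ a * b :=
  le_trans (spec_mul_le A B) (mul_le_mul hA hB (spec_nonneg _) (le_trans (spec_nonneg _) hA))

lemma sandwich_mul {d k : ℕ} (W : Matrix (Fin d) (Fin k) ℝ) (hW : Wᵀ * W = 1)
    (f g : Fin k → ℝ) :
    (W * Matrix.diagonal f * Wᵀ) * (W * Matrix.diagonal g * Wᵀ)
      = W * Matrix.diagonal (f * g) * Wᵀ := by
  simp only [Matrix.mul_assoc]
  rw [← Matrix.mul_assoc Wᵀ W (Matrix.diagonal g * Wᵀ), hW, Matrix.one_mul,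
    ← Matrix.mul_assoc (Matrix.diagonal f) (Matrix.diagonal g) Wᵀ,
    Matrix.diagonal_mul_diagonal]
  rfl

lemma ortho_slice {d k : ℕ} (hdk : k ≤ d) (P : Matrix (Fin d) (Fin d) ℝ)
    (W : Matrix (Fin d) (Fin k) ℝ) (hP : Pᵀ * P = 1)
    (hW : W = Matrix.of fun i (j : Fin k) => P i (Fin.castLE hdk j)) :
    Wᵀ * W = 1 := by
  ext a b
  have h1 := congrFun (congrFun hP (Fin.castLE hdk a)) (Fin.castLE hdk b)
  rw [Matrix.mul_apply] at h1
  simp only [Matrix.transpose_apply] at h1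
  rw [Matrix.mul_apply]
  simp only [hW, Matrix.transpose_apply, Matrix.of_apply]
  rw [h1, Matrix.one_apply, Matrix.one_apply]
  simp [Fin.castLE_inj]


set_option maxHeartbeats 4000000 in
/-- **Properties of projection operators.**
Let `M₂` be symmetric psd of rank `k` with `ς_k[M₂] > 0` and `M̂₂` symmetric with
`Err := ‖M̂₂ − M₂‖₂/ς_k[M₂] ≤ 1/3`.  With `U, Û` the orthonormal left singular vectors of
`M₂, M̂₂` for their top `k` singular values (extracted from full singular value
decompositions), and `S, Ŝ` the corresponding diagonal matrices of singular values:
(1) `(1+Err)·S ⪰ Ûᵀ M̂₂ Û = Ŝ ⪰ (1−Err)·S ≻ 0`;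
(2) `ς_k[Ûᵀ U] ≥ √(1 − (9/4)Err²) > 0`;
(3) `ς_k[Ûᵀ M₂ Û] ≥ (1 − (9/4)Err²) ς_k[M₂] > 0`;
(4) `‖(I − ÛÛᵀ)UUᵀ‖₂ ≤ (3/2)Err`. -/
theorem projection_operator_properties
    (d k : ℕ) (hk : 0 < k) (hdk : k ≤ d)
    (M2 M2hat : Matrix (Fin d) (Fin d) ℝ)
    (hM2psd : M2.PosSemidef) (hM2rank : M2.rank = k) (hςk : 0 < kthSV M2 k)
    (hM2hat : M2hat.IsHermitian)
    -- a full SVD of `M₂`, with `U` the first `k` left singular vectors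
    (PU QU : Matrix (Fin d) (Fin d) ℝ) (sU : Fin d → ℝ)
    (hPU : PUᵀ * PU = 1) (hQU : QUᵀ * QU = 1)
    (hsU : ∀ j : Fin d, sU j = kthSV M2 ((j : ℕ) + 1))
    (hsvdU : M2 = PU * Matrix.diagonal sU * QUᵀ)
    (U : Matrix (Fin d) (Fin k) ℝ)
    (hU : U = Matrix.of fun i (j : Fin k) => PU i (Fin.castLE hdk j))
    -- a full SVD of `M̂₂`, with `Û` the first `k` left singular vectors
    (PV QV : Matrix (Fin d) (Fin d) ℝ) (sV : Fin d → ℝ)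
    (hPV : PVᵀ * PV = 1) (hQV : QVᵀ * QV = 1)
    (hsV : ∀ j : Fin d, sV j = kthSV M2hat ((j : ℕ) + 1))
    (hsvdV : M2hat = PV * Matrix.diagonal sV * QVᵀ)
    (Uhat : Matrix (Fin d) (Fin k) ℝ)
    (hUhat : Uhat = Matrix.of fun i (j : Fin k) => PV i (Fin.castLE hdk j))
    -- the diagonal matrices of top-`k` singular values
    (S Shat : Fin k → ℝ)
    (hS : ∀ j : Fin k, S j = kthSV M2 ((j : ℕ) + 1))
    (hShat : ∀ j : Fin k, Shat j = kthSV M2hat ((j : ℕ) + 1))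
    (Err : ℝ) (hErr : Err = spec (M2hat - M2) / kthSV M2 k) (hErr13 : Err ≤ 1 / 3) :
    -- (1)
    (((1 + Err) • Matrix.diagonal S - Uhatᵀ * M2hat * Uhat).PosSemidef ∧
      Uhatᵀ * M2hat * Uhat = Matrix.diagonal Shat ∧
      (Matrix.diagonal Shat - (1 - Err) • Matrix.diagonal S).PosSemidef ∧
      ((1 - Err) • Matrix.diagonal S).PosDef) ∧
    -- (2)
    (Real.sqrt (1 - (9 / 4) * Err ^ 2) ≤ kthSV (Uhatᵀ * U) k ∧ 0 < kthSV (Uhatᵀ * U) k) ∧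
    -- (3)
    ((1 - (9 / 4) * Err ^ 2) * kthSV M2 k ≤ kthSV (Uhatᵀ * M2 * Uhat) k ∧
      0 < kthSV (Uhatᵀ * M2 * Uhat) k) ∧
    -- (4)
    spec ((1 - Uhat * Uhatᵀ) * (U * Uᵀ)) ≤ (3 / 2) * Err := by
  classical
  have hd0 : 0 < d := lt_of_lt_of_le hk hdk
  set σ : ℝ := kthSV M2 k with hσdef
  have hσ : 0 < σ := hςk
  set Em : Matrix (Fin d) (Fin d) ℝ := M2hat - M2 with hEmdef
  have hspecE : spec Em = Err * σ := by
    rw [hErr]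
    exact (div_mul_cancel₀ _ (ne_of_gt hσ)).symm
  have hE0 : 0 ≤ Err := by
    rw [hErr]
    exact div_nonneg (spec_nonneg _) (le_of_lt hσ)
  have hEσ : Err * σ ≤ σ / 3 := by nlinarith
  -- antitone and nonneg of singular values
  have hsU0 : ∀ i, 0 ≤ sU i := fun i => (hsU i) ▸ kthSV_nonneg M2 _
  have hsV0 : ∀ i, 0 ≤ sV i := fun i => (hsV i) ▸ kthSV_nonneg M2hat _
  have hsUanti : Antitone sU := by
    intro a b hab
    have hab' : (a : ℕ) ≤ (b : ℕ) := hab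
    rw [hsU a, hsU b]
    exact kthSV_antitone M2 (by omega) (by omega) hd0
  have hsVanti : Antitone sV := by
    intro a b hab
    have hab' : (a : ℕ) ≤ (b : ℕ) := hab
    rw [hsV a, hsV b]
    exact kthSV_antitone M2hat (by omega) (by omega) hd0
  have hσU : sU ⟨k - 1, by omega⟩ = σ := by
    rw [hsU, hσdef]
    show kthSV M2 (k - 1 + 1) = kthSV M2 k
    congr 1
    omega
  have hsUpos : ∀ i : Fin d, (i : ℕ) < k → σ ≤ sU i := by
    intro i hi
    rw [← hσU]
    apply hsUanti
    show (i : ℕ) ≤ k - 1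
    omega
  -- rank: sU vanishes from k on
  have hPU' : PU * PUᵀ = 1 := mul_eq_one_comm.mp hPU
  have hQU' : QU * QUᵀ = 1 := mul_eq_one_comm.mp hQU
  have hPV' : PV * PVᵀ = 1 := mul_eq_one_comm.mp hPV
  have hPUdet : IsUnit PU.det :=
    IsUnit.of_mul_eq_one _ (by rw [← Matrix.det_mul, hPU']; exact Matrix.det_one)
  have hQUtdet : IsUnit QUᵀ.det :=
    IsUnit.of_mul_eq_one QU.det (by rw [← Matrix.det_mul, hQU]; exact Matrix.det_one)
  have hrankD : (Matrix.diagonal sU).rank = k := by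
    have h1 : M2.rank = (Matrix.diagonal sU * QUᵀ).rank := by
      rw [hsvdU, Matrix.mul_assoc]
      exact Matrix.rank_mul_eq_right_of_isUnit_det PU _ hPUdet
    have h2 : (Matrix.diagonal sU * QUᵀ).rank = (Matrix.diagonal sU).rank :=
      Matrix.rank_mul_eq_left_of_isUnit_det QUᵀ _ hQUtdet
    rw [← h2, ← h1, hM2rank]
  have hsUk : ∀ i : Fin d, k ≤ (i : ℕ) → sU i = 0 := by
    intro i hik
    by_contra hne
    have hipos : 0 < sU i := lt_of_le_of_ne (hsU0 i) (Ne.symm hne)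
    have hcard : Fintype.card {a : Fin d // sU a ≠ 0} = k := by
      rw [← Matrix.rank_diagonal sU, hrankD]
    have hmem : ∀ j : Fin (k + 1), sU ⟨(j : ℕ), by omega⟩ ≠ 0 := by
      intro j
      have hle : (⟨(j : ℕ), by omega⟩ : Fin d) ≤ i := by
        show (j : ℕ) ≤ (i : ℕ)
        omega
      exact ne_of_gt (lt_of_lt_of_le hipos (hsUanti hle))
    have hinj : Function.Injective
        (fun j : Fin (k + 1) => (⟨⟨(j : ℕ), by omega⟩, hmem j⟩ : {a : Fin d // sU a ≠ 0})) := by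
      intro a b hab
      have : ((a : ℕ) : ℕ) = ((b : ℕ) : ℕ) := by
        have := congrArg (fun z : {a : Fin d // sU a ≠ 0} => ((z : Fin d) : ℕ)) hab
        simpa using this
      exact Fin.ext (by simpa using this)
    have := Fintype.card_le_of_injective _ hinj
    rw [hcard, Fintype.card_fin] at this
    omega
  -- Weyl inequalities
  have hW1 : ∀ j : Fin d, sV j ≤ sU j + Err * σ := by
    intro j
    have := weyl M2 M2hat PU QU PV QV sU sV hPU hQU hPV hQV hsvdU hsvdV hsUanti hsU0 hsVanti
      hsV0 j
    rwa [← hEmdef, hspecE] at this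
  have hW2 : ∀ j : Fin d, sU j ≤ sV j + Err * σ := by
    intro j
    have := weyl M2hat M2 PV QV PU QU sV sU hPV hQV hPU hQU hsvdV hsvdU hsVanti hsV0 hsUanti
      hsU0 j
    have hnegs : spec (M2 - M2hat) = Err * σ := by
      rw [show M2 - M2hat = -(M2hat - M2) from (neg_sub _ _).symm, spec_neg, ← hEmdef, hspecE]
    rwa [hnegs] at this
  -- symmetry and quadratic forms
  have hM2sym : M2ᵀ = M2 := by
    have h := hM2psd.1
    rwa [Matrix.IsHermitian, conjTranspose_eq_transpose] at h
  have hM2hatsym : M2hatᵀ = M2hat := by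
    have h := hM2hat
    rwa [Matrix.IsHermitian, conjTranspose_eq_transpose] at h
  have hM2quad : ∀ x : Fin d → ℝ, 0 ≤ x ⬝ᵥ (M2 *ᵥ x) := by
    intro x
    have := hM2psd.dotProduct_mulVec_nonneg x
    simpa using this
  have hM2hatquad : ∀ x : Fin d → ℝ, -(Err * σ) * (x ⬝ᵥ x) ≤ x ⬝ᵥ (M2hat *ᵥ x) := by
    intro x
    have h1 : M2hat *ᵥ x = M2 *ᵥ x + Em *ᵥ x := by
      rw [hEmdef, Matrix.sub_mulVec]
      abel
    rw [h1, dotProduct_add]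
    have h2 := abs_dot_mulVec_le Em x
    rw [hspecE] at h2
    have h3 := hM2quad x
    have h4 := neg_abs_le (x ⬝ᵥ (Em *ᵥ x))
    nlinarith [dot_self_nonneg x]
  -- identification of columns
  have hQUcol : ∀ a : Fin d, (a : ℕ) < k → (fun i => QU i a) = (fun i => PU i a) := by
    intro a ha
    apply svd_col_eq hsvdU hM2sym hQU hPU (c := 0)
    · intro x
      simpa using hM2quad x
    · exact lt_of_lt_of_le hσ (hsUpos a ha)
  have hsVlow : ∀ a : Fin d, (a : ℕ) < k → 2 / 3 * σ ≤ sV a := by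
    intro a ha
    have h1 : σ ≤ sV ⟨k - 1, by omega⟩ + Err * σ := by
      have := hW2 ⟨k - 1, by omega⟩
      rwa [hσU] at this
    have h2 : sV ⟨k - 1, by omega⟩ ≤ sV a := by
      apply hsVanti
      show (a : ℕ) ≤ k - 1
      omega
    nlinarith
  have hQVcol : ∀ a : Fin d, (a : ℕ) < k → (fun i => QV i a) = (fun i => PV i a) := by
    intro a ha
    apply svd_col_eq hsvdV hM2hatsym hQV hPV (c := Err * σ)
    · exact hM2hatquad
    · have := hsVlow a ha
      nlinarith
  -- representations
  have hM2PU : M2 = PU * Matrix.diagonal sU * PUᵀ :=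
    svd_sym_repr hsvdU (fun a ha => hQUcol a (by
      by_contra h
      exact ha (hsUk a (le_of_not_gt h))))
  have hSval : ∀ j : Fin k, S j = sU (Fin.castLE hdk j) := by
    intro j
    rw [hS j, hsU]
    rfl
  have hShatval : ∀ j : Fin k, Shat j = sV (Fin.castLE hdk j) := by
    intro j
    rw [hShat j, hsV]
    rfl
  have hM2repr : M2 = U * Matrix.diagonal S * Uᵀ := by
    rw [hM2PU]
    exact (slice_repr hdk PU U hU S sU hSval hsUk).symm
  set indk : Fin d → ℝ := fun i => if (i : ℕ) < k then 1 else 0 with hindk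
  set indkc : Fin d → ℝ := fun i => if (i : ℕ) < k then 0 else 1 with hindkc
  have hind_val : ∀ j : Fin k, (fun _ : Fin k => (1:ℝ)) j = indk (Fin.castLE hdk j) := by
    intro j
    rw [hindk]
    simp only []
    rw [if_pos (show ((Fin.castLE hdk j : Fin d) : ℕ) < k from j.isLt)]
  have hindk0 : ∀ i : Fin d, k ≤ (i : ℕ) → indk i = 0 := by
    intro i h
    rw [hindk]
    simp only []
    rw [if_neg (by omega)]
  have hPhrepr : Uhat * Uhatᵀ = PV * Matrix.diagonal indk * PVᵀ := by
    have h := slice_repr hdk PV Uhat hUhat (fun _ => (1:ℝ)) indk hind_val hindk0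
    rwa [Matrix.diagonal_one, Matrix.mul_one] at h
  have hPrepr : U * Uᵀ = PU * Matrix.diagonal indk * PUᵀ := by
    have h := slice_repr hdk PU U hU (fun _ => (1:ℝ)) indk hind_val hindk0
    rwa [Matrix.diagonal_one, Matrix.mul_one] at h
  have hdiffdiag : (Matrix.diagonal (fun _ : Fin d => (1:ℝ)) - Matrix.diagonal indk)
      = Matrix.diagonal indkc := by
    ext i j
    by_cases hij : i = j
    · subst hij
      by_cases h : (i : ℕ) < k <;>
        simp [Matrix.sub_apply, Matrix.diagonal_apply_eq, hindk, hindkc, h]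
    · simp [Matrix.sub_apply, Matrix.diagonal_apply_ne _ hij, Matrix.one_apply_ne hij]
  have hZrepr : 1 - Uhat * Uhatᵀ = PV * Matrix.diagonal indkc * PVᵀ := by
    rw [hPhrepr, show (1 : Matrix (Fin d) (Fin d) ℝ)
        = PV * Matrix.diagonal (fun _ => (1:ℝ)) * PVᵀ from by
      rw [Matrix.diagonal_one, Matrix.mul_one, hPV'],
      ← Matrix.sub_mul, ← Matrix.mul_sub, hdiffdiag]
  have hZ2repr : 1 - U * Uᵀ = PU * Matrix.diagonal indkc * PUᵀ := by
    rw [hPrepr, show (1 : Matrix (Fin d) (Fin d) ℝ)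
        = PU * Matrix.diagonal (fun _ => (1:ℝ)) * PUᵀ from by
      rw [Matrix.diagonal_one, Matrix.mul_one, hPU'],
      ← Matrix.sub_mul, ← Matrix.mul_sub, hdiffdiag]
  have hUtU : Uᵀ * U = 1 := ortho_slice hdk PU U hPU hU
  have hUhtUh : Uhatᵀ * Uhat = 1 := ortho_slice hdk PV Uhat hPV hUhat
  -- M2hat leaves the span of Uhat invariant
  have hM2hatUhat : M2hat * Uhat = Uhat * Matrix.diagonal Shat := by
    ext i j
    have hjk : ((Fin.castLE hdk j : Fin d) : ℕ) < k := j.isLt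
    have hact := svd_mulVec_col hsvdV hQV (Fin.castLE hdk j)
    rw [hQVcol (Fin.castLE hdk j) hjk] at hact
    have hL : (M2hat * Uhat) i j = (M2hat *ᵥ (fun a => PV a (Fin.castLE hdk j))) i := by
      rw [Matrix.mul_apply]
      simp [Matrix.mulVec, dotProduct, hUhat]
    have hR : (Uhat * Matrix.diagonal Shat) i j
        = PV i (Fin.castLE hdk j) * sV (Fin.castLE hdk j) := by
      rw [Matrix.mul_diagonal, hShatval, hUhat]
      rfl
    rw [hL, hact, hR]
    simp [mul_comm]
  have hdiagShat : Uhatᵀ * M2hat * Uhat = Matrix.diagonal Shat := by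
    rw [Matrix.mul_assoc, hM2hatUhat, ← Matrix.mul_assoc, hUhtUh, Matrix.one_mul]
  -- scalar bounds on S, Shat
  have hSlow : ∀ j : Fin k, σ ≤ S j := by
    intro j
    rw [hSval]
    exact hsUpos _ j.isLt
  have hShat_ub : ∀ j : Fin k, Shat j ≤ (1 + Err) * S j := by
    intro j
    have h1 := hW1 (Fin.castLE hdk j)
    rw [← hSval, ← hShatval] at h1
    nlinarith [hSlow j]
  have hShat_lb : ∀ j : Fin k, (1 - Err) * S j ≤ Shat j := by
    intro j
    have h1 := hW2 (Fin.castLE hdk j)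
    rw [← hSval, ← hShatval] at h1
    nlinarith [hSlow j]
  have hShatpos : ∀ j : Fin k, 2 / 3 * σ ≤ Shat j := by
    intro j
    rw [hShatval]
    exact hsVlow _ j.isLt
  -- part (1)
  have hsmuldiag : ∀ (c : ℝ) (f : Fin k → ℝ), c • Matrix.diagonal f
      = Matrix.diagonal (fun j => c * f j) := by
    intro c f
    ext i j
    by_cases hij : i = j
    · subst hij
      simp [Matrix.smul_apply, Matrix.diagonal_apply_eq, smul_eq_mul]
    · simp [Matrix.smul_apply, Matrix.diagonal_apply_ne _ hij]
  have hpart1a : ((1 + Err) • Matrix.diagonal S - Uhatᵀ * M2hat * Uhat).PosSemidef := by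
    rw [hdiagShat, hsmuldiag, show Matrix.diagonal (fun j => (1 + Err) * S j)
        - Matrix.diagonal Shat = Matrix.diagonal (fun j => (1 + Err) * S j - Shat j) from by
      ext i j
      by_cases hij : i = j
      · subst hij; simp [Matrix.sub_apply, Matrix.diagonal_apply_eq]
      · simp [Matrix.sub_apply, Matrix.diagonal_apply_ne _ hij]]
    exact Matrix.posSemidef_diagonal_iff.mpr fun j => by have := hShat_ub j; linarith
  have hpart1c : (Matrix.diagonal Shat - (1 - Err) • Matrix.diagonal S).PosSemidef := by
    rw [hsmuldiag, show Matrix.diagonal Shat - Matrix.diagonal (fun j => (1 - Err) * S j)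
        = Matrix.diagonal (fun j => Shat j - (1 - Err) * S j) from by
      ext i j
      by_cases hij : i = j
      · subst hij; simp [Matrix.sub_apply, Matrix.diagonal_apply_eq]
      · simp [Matrix.sub_apply, Matrix.diagonal_apply_ne _ hij]]
    exact Matrix.posSemidef_diagonal_iff.mpr fun j => by have := hShat_lb j; linarith
  have hpart1d : ((1 - Err) • Matrix.diagonal S).PosDef := by
    rw [hsmuldiag]
    exact Matrix.posDef_diagonal_iff.mpr fun j => by nlinarith [hSlow j]
  -- spec bounds
  have hspecU : spec U ≤ 1 := spec_le_one_of_isometry hUtU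
  have hspecUh : spec Uhat ≤ 1 := spec_le_one_of_isometry hUhtUh
  have hspecUt : spec Uᵀ ≤ 1 := by rw [spec_transpose]; exact hspecU
  have hspecUht : spec Uhatᵀ ≤ 1 := by rw [spec_transpose]; exact hspecUh
  have hspecPV : spec PV ≤ 1 := spec_le_one_of_isometry hPV
  have hspecPVt : spec PVᵀ ≤ 1 := by rw [spec_transpose]; exact hspecPV
  have hspecPU : spec PU ≤ 1 := spec_le_one_of_isometry hPU
  have hspecPUt : spec PUᵀ ≤ 1 := by rw [spec_transpose]; exact hspecPU
  have hspecQV : spec QV ≤ 1 := spec_le_one_of_isometry hQV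
  have hspecindkc : spec (Matrix.diagonal indkc) ≤ 1 := by
    apply spec_diagonal_le zero_le_one
    intro i
    rw [hindkc]
    by_cases h : (i : ℕ) < k <;> simp [h]
  have hspecZ : spec (1 - Uhat * Uhatᵀ) ≤ 1 := by
    rw [hZrepr]
    calc spec (PV * Matrix.diagonal indkc * PVᵀ) ≤ 1 * 1 * 1 :=
      spec_mul_le_of_le (spec_mul_le_of_le hspecPV hspecindkc zero_le_one) hspecPVt zero_le_one
    _ = 1 := by norm_num
  have hspecZ2 : spec (1 - U * Uᵀ) ≤ 1 := by
    rw [hZ2repr]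
    calc spec (PU * Matrix.diagonal indkc * PUᵀ) ≤ 1 * 1 * 1 :=
      spec_mul_le_of_le (spec_mul_le_of_le hspecPU hspecindkc zero_le_one) hspecPUt zero_le_one
    _ = 1 := by norm_num
  -- pseudoinverse of M2
  set Sinv : Fin k → ℝ := fun j => (S j)⁻¹ with hSinvdef
  set M2p := U * Matrix.diagonal Sinv * Uᵀ with hM2pdef
  have hSne : ∀ j, S j ≠ 0 := fun j => ne_of_gt (lt_of_lt_of_le hσ (hSlow j))
  have hσinv0 : (0:ℝ) ≤ σ⁻¹ := inv_nonneg.mpr hσ.le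
  have hspecSinv : spec (Matrix.diagonal Sinv) ≤ σ⁻¹ := by
    apply spec_diagonal_le hσinv0
    intro i
    rw [hSinvdef]
    simp only []
    rw [abs_of_nonneg (inv_nonneg.mpr (le_trans hσ.le (hSlow i)))]
    exact inv_anti₀ hσ (hSlow i)
  have hspecM2p : spec M2p ≤ σ⁻¹ := by
    rw [hM2pdef]
    calc spec (U * Matrix.diagonal Sinv * Uᵀ) ≤ 1 * σ⁻¹ * 1 :=
      spec_mul_le_of_le (spec_mul_le_of_le hspecU hspecSinv hσinv0) hspecUt zero_le_one
    _ = σ⁻¹ := by ring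
  -- invariance identity for M2hat
  have hZUhat : (1 - Uhat * Uhatᵀ) * Uhat = 0 := by
    rw [Matrix.sub_mul, Matrix.one_mul, Matrix.mul_assoc, hUhtUh, Matrix.mul_one, sub_self]
  have h0ZMP : (1 - Uhat * Uhatᵀ) * M2hat * (Uhat * Uhatᵀ) = 0 := by
    rw [← Matrix.mul_assoc ((1 - Uhat * Uhatᵀ) * M2hat) Uhat Uhatᵀ,
      Matrix.mul_assoc (1 - Uhat * Uhatᵀ) M2hat Uhat, hM2hatUhat,
      ← Matrix.mul_assoc (1 - Uhat * Uhatᵀ) Uhat (Matrix.diagonal Shat), hZUhat,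
      Matrix.zero_mul, Matrix.zero_mul]
  have hZM2hatZ : (1 - Uhat * Uhatᵀ) * M2hat * (1 - Uhat * Uhatᵀ)
      = (1 - Uhat * Uhatᵀ) * M2hat := by
    rw [Matrix.mul_sub, Matrix.mul_one, h0ZMP, sub_zero]
  have hsvdV' : M2hat = QV * Matrix.diagonal sV * PVᵀ := by
    conv_lhs => rw [← hM2hatsym]
    rw [show M2hatᵀ = (PV * Matrix.diagonal sV * QVᵀ)ᵀ from congrArg Matrix.transpose hsvdV,
      Matrix.transpose_mul, Matrix.transpose_mul, Matrix.transpose_transpose,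
      Matrix.diagonal_transpose, Matrix.mul_assoc]
  have hEσ0 : (0:ℝ) ≤ Err * σ := mul_nonneg hE0 hσ.le
  have hsVindkc : ∀ i, |sV i * indkc i| ≤ Err * σ := by
    intro i
    rw [hindkc]
    simp only []
    by_cases h : (i : ℕ) < k
    · rw [if_pos h, mul_zero, abs_zero]
      exact hEσ0
    · rw [if_neg h, mul_one, abs_of_nonneg (hsV0 i)]
      have h1 := hW1 i
      have h2 := hsUk i (le_of_not_gt h)
      linarith
  have hZM2hatform : (1 - Uhat * Uhatᵀ) * M2hat * (1 - Uhat * Uhatᵀ)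
      = PV * (Matrix.diagonal indkc * (PVᵀ * QV)
          * Matrix.diagonal (fun i => sV i * indkc i)) * PVᵀ := by
    rw [hZrepr, hsvdV']
    simp only [Matrix.mul_assoc]
    rw [← Matrix.mul_assoc PVᵀ PV (Matrix.diagonal indkc * PVᵀ), hPV, Matrix.one_mul,
      ← Matrix.mul_assoc (Matrix.diagonal sV) (Matrix.diagonal indkc) PVᵀ,
      Matrix.diagonal_mul_diagonal]
  have hspecZM2hat : spec ((1 - Uhat * Uhatᵀ) * M2hat) ≤ Err * σ := by
    rw [← hZM2hatZ, hZM2hatform]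
    have h1 : spec (Matrix.diagonal (fun i => sV i * indkc i)) ≤ Err * σ :=
      spec_diagonal_le hEσ0 hsVindkc
    have h2 : spec (PVᵀ * QV) ≤ 1 := by
      calc spec (PVᵀ * QV) ≤ 1 * 1 := spec_mul_le_of_le hspecPVt hspecQV zero_le_one
      _ = 1 := by norm_num
    have h3 : spec (Matrix.diagonal indkc * (PVᵀ * QV)
        * Matrix.diagonal (fun i => sV i * indkc i)) ≤ Err * σ := by
      calc spec _ ≤ 1 * 1 * (Err * σ) :=
        spec_mul_le_of_le (spec_mul_le_of_le hspecindkc h2 zero_le_one) h1 hEσ0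
      _ = Err * σ := by ring
    calc spec (PV * (Matrix.diagonal indkc * (PVᵀ * QV)
            * Matrix.diagonal (fun i => sV i * indkc i)) * PVᵀ) ≤ 1 * (Err * σ) * 1 :=
        spec_mul_le_of_le (spec_mul_le_of_le hspecPV h3 hEσ0) hspecPVt zero_le_one
    _ = Err * σ := by ring
  -- the recursion for X = (1 - P̂) P
  set X := (1 - Uhat * Uhatᵀ) * (U * Uᵀ) with hXdef
  have hM2M2p : M2 * M2p = U * Uᵀ := by
    rw [hM2pdef]
    nth_rewrite 1 [hM2repr]
    rw [sandwich_mul U hUtU,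
      show (S * Sinv) = fun _ => (1:ℝ) from funext fun j => mul_inv_cancel₀ (hSne j),
      Matrix.diagonal_one, Matrix.mul_one]
  have hPM2p : (U * Uᵀ) * M2p = M2p := by
    rw [hM2pdef]
    simp only [Matrix.mul_assoc]
    rw [← Matrix.mul_assoc Uᵀ U (Matrix.diagonal Sinv * Uᵀ), hUtU, Matrix.one_mul]
  have hZM2p : (1 - Uhat * Uhatᵀ) * M2p = X * M2p := by
    rw [hXdef, Matrix.mul_assoc, hPM2p]
  have hXid : X = ((1 - Uhat * Uhatᵀ) * M2hat) * (X * M2p)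
      - (1 - Uhat * Uhatᵀ) * Em * M2p := by
    have e1 : X = (1 - Uhat * Uhatᵀ) * M2 * M2p := by
      rw [hXdef, ← hM2M2p, ← Matrix.mul_assoc]
    have e2 : (1 - Uhat * Uhatᵀ) * M2 * M2p
        = (1 - Uhat * Uhatᵀ) * M2hat * M2p - (1 - Uhat * Uhatᵀ) * Em * M2p := by
      rw [show M2 = M2hat - Em from by rw [hEmdef]; abel, Matrix.mul_sub, Matrix.sub_mul]
    have e3 : (1 - Uhat * Uhatᵀ) * M2hat * M2p
        = ((1 - Uhat * Uhatᵀ) * M2hat) * (X * M2p) := by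
      conv_lhs => rw [← hZM2hatZ]
      rw [Matrix.mul_assoc ((1 - Uhat * Uhatᵀ) * M2hat) (1 - Uhat * Uhatᵀ) M2p, hZM2p]
    calc X = (1 - Uhat * Uhatᵀ) * M2 * M2p := e1
    _ = (1 - Uhat * Uhatᵀ) * M2hat * M2p - (1 - Uhat * Uhatᵀ) * Em * M2p := e2
    _ = ((1 - Uhat * Uhatᵀ) * M2hat) * (X * M2p) - (1 - Uhat * Uhatᵀ) * Em * M2p := by
        rw [e3]
  have hspecX : spec X ≤ 3 / 2 * Err := by
    have hs0 : 0 ≤ spec X := spec_nonneg X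
    have hb1 : spec (((1 - Uhat * Uhatᵀ) * M2hat) * (X * M2p))
        ≤ (Err * σ) * (spec X * σ⁻¹) :=
      spec_mul_le_of_le hspecZM2hat (spec_mul_le_of_le le_rfl hspecM2p hσinv0)
        (mul_nonneg hs0 hσinv0)
    have hb2 : spec ((1 - Uhat * Uhatᵀ) * Em * M2p) ≤ 1 * (Err * σ) * σ⁻¹ :=
      spec_mul_le_of_le (spec_mul_le_of_le hspecZ (le_of_eq hspecE) hEσ0) hspecM2p hσinv0
    have hsub : spec X ≤ (Err * σ) * (spec X * σ⁻¹) + 1 * (Err * σ) * σ⁻¹ := by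
      calc spec X = spec (((1 - Uhat * Uhatᵀ) * M2hat) * (X * M2p)
          - (1 - Uhat * Uhatᵀ) * Em * M2p) := congrArg spec hXid
      _ ≤ spec (((1 - Uhat * Uhatᵀ) * M2hat) * (X * M2p))
            + spec ((1 - Uhat * Uhatᵀ) * Em * M2p) := by
          rw [spec_eq_norm, spec_eq_norm, spec_eq_norm]
          exact norm_sub_le _ _
      _ ≤ (Err * σ) * (spec X * σ⁻¹) + 1 * (Err * σ) * σ⁻¹ := add_le_add hb1 hb2
    have e1 : (Err * σ) * (spec X * σ⁻¹) = Err * spec X := by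
      field_simp
    have e2 : 1 * (Err * σ) * σ⁻¹ = Err := by
      field_simp
    rw [e1, e2] at hsub
    have hEs : Err * spec X ≤ 1 / 3 * spec X := mul_le_mul_of_nonneg_right hErr13 hs0
    linarith
  -- part (2)
  have hPU_absorb : (U * Uᵀ) * U = U := by
    rw [Matrix.mul_assoc, hUtU, Matrix.mul_one]
  have hXU : X * U = (1 - Uhat * Uhatᵀ) * U := by
    rw [hXdef, Matrix.mul_assoc (1 - Uhat * Uhatᵀ) (U * Uᵀ) U, hPU_absorb]
  have hspecXU : spec (X * U) ≤ 3 / 2 * Err := by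
    calc spec (X * U) ≤ (3 / 2 * Err) * 1 := spec_mul_le_of_le hspecX hspecU zero_le_one
    _ = 3 / 2 * Err := by ring
  have hZsym : (1 - Uhat * Uhatᵀ)ᵀ = 1 - Uhat * Uhatᵀ := by
    rw [Matrix.transpose_sub, Matrix.transpose_one, Matrix.transpose_mul,
      Matrix.transpose_transpose]
  have hZidem : (1 - Uhat * Uhatᵀ) * (1 - Uhat * Uhatᵀ) = 1 - Uhat * Uhatᵀ := by
    rw [Matrix.mul_sub, Matrix.mul_one, Matrix.sub_mul, Matrix.one_mul,
      show Uhat * Uhatᵀ * (Uhat * Uhatᵀ) = Uhat * Uhatᵀ from by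
        rw [Matrix.mul_assoc Uhat Uhatᵀ (Uhat * Uhatᵀ), ← Matrix.mul_assoc Uhatᵀ Uhat Uhatᵀ,
          hUhtUh, Matrix.one_mul]]
    abel
  have hUtZU : (X * U)ᵀ * (X * U) = Uᵀ * (1 - Uhat * Uhatᵀ) * U := by
    rw [hXU, Matrix.transpose_mul, hZsym,
      Matrix.mul_assoc Uᵀ (1 - Uhat * Uhatᵀ) ((1 - Uhat * Uhatᵀ) * U),
      ← Matrix.mul_assoc (1 - Uhat * Uhatᵀ) (1 - Uhat * Uhatᵀ) U, hZidem,
      ← Matrix.mul_assoc]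
  have hGram : (Uhatᵀ * U)ᵀ * (Uhatᵀ * U) = 1 - (X * U)ᵀ * (X * U) := by
    have h1 : Uᵀ * (1 - Uhat * Uhatᵀ) * U = 1 - (Uᵀ * Uhat) * (Uhatᵀ * U) := by
      rw [Matrix.mul_sub, Matrix.mul_one, Matrix.sub_mul, hUtU]
      congr 1
      simp only [Matrix.mul_assoc]
    rw [hUtZU, h1, Matrix.transpose_mul, Matrix.transpose_transpose, sub_sub_cancel]
  have hquadG : ∀ x : Fin k → ℝ, (1 - 9 / 4 * Err ^ 2) * (x ⬝ᵥ x)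
      ≤ ((Uhatᵀ * U) *ᵥ x) ⬝ᵥ ((Uhatᵀ * U) *ᵥ x) := by
    intro x
    rw [dot_mulVec_self, hGram, Matrix.sub_mulVec, Matrix.one_mulVec, dotProduct_sub,
      ← dot_mulVec_self]
    have hb : ((X * U) *ᵥ x) ⬝ᵥ ((X * U) *ᵥ x) ≤ 9 / 4 * Err ^ 2 * (x ⬝ᵥ x) := by
      have h2 : ‖ev ((X * U) *ᵥ x)‖ ≤ (3 / 2 * Err) * ‖ev x‖ :=
        le_trans (norm_mulVec_le (X * U) x)
          (mul_le_mul_of_nonneg_right hspecXU (norm_nonneg _))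
      have h3 : ‖ev ((X * U) *ᵥ x)‖ ^ 2 ≤ ((3 / 2 * Err) * ‖ev x‖) ^ 2 :=
        pow_le_pow_left₀ (norm_nonneg _) h2 2
      rw [norm_ev_sq] at h3
      calc ((X * U) *ᵥ x) ⬝ᵥ ((X * U) *ᵥ x) ≤ ((3 / 2 * Err) * ‖ev x‖) ^ 2 := h3
      _ = 9 / 4 * Err ^ 2 * ‖ev x‖ ^ 2 := by ring
      _ = 9 / 4 * Err ^ 2 * (x ⬝ᵥ x) := by rw [norm_ev_sq]
    linarith [dot_self_nonneg x]
  have hpart2a : Real.sqrt (1 - 9 / 4 * Err ^ 2) ≤ kthSV (Uhatᵀ * U) k :=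
    kthSV_k_lower hk _ hquadG
  have hpart2b : 0 < kthSV (Uhatᵀ * U) k :=
    lt_of_lt_of_le (Real.sqrt_pos.mpr (by nlinarith)) hpart2a
  -- part (3)
  set β : ℝ := 1 - 9 / 4 * Err ^ 2 with hβdef
  have hβpos : 0 < β := by rw [hβdef]; nlinarith
  set X2 := (1 - U * Uᵀ) * (Uhat * Uhatᵀ) with hX2def
  set Shinv : Fin k → ℝ := fun j => (Shat j)⁻¹ with hShinvdef
  set N := Uhat * Matrix.diagonal Shinv * Uhatᵀ with hNdef
  have h23σ : (0:ℝ) < 2 / 3 * σ := by nlinarith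
  have hShne : ∀ j, Shat j ≠ 0 := fun j => ne_of_gt (lt_of_lt_of_le h23σ (hShatpos j))
  have hspecShinv : spec (Matrix.diagonal Shinv) ≤ (2 / 3 * σ)⁻¹ := by
    apply spec_diagonal_le (inv_nonneg.mpr h23σ.le)
    intro i
    rw [hShinvdef]
    simp only []
    rw [abs_of_nonneg (inv_nonneg.mpr (le_trans h23σ.le (hShatpos i)))]
    exact inv_anti₀ h23σ (hShatpos i)
  have hspecN : spec N ≤ (2 / 3 * σ)⁻¹ := by
    rw [hNdef]
    calc spec (Uhat * Matrix.diagonal Shinv * Uhatᵀ) ≤ 1 * (2 / 3 * σ)⁻¹ * 1 :=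
      spec_mul_le_of_le (spec_mul_le_of_le hspecUh hspecShinv (inv_nonneg.mpr h23σ.le)) hspecUht zero_le_one
    _ = (2 / 3 * σ)⁻¹ := by ring
  have hM2hatN : M2hat * N = Uhat * Uhatᵀ := by
    rw [hNdef, ← Matrix.mul_assoc, ← Matrix.mul_assoc, hM2hatUhat,
      Matrix.mul_assoc Uhat (Matrix.diagonal Shat) (Matrix.diagonal Shinv),
      Matrix.diagonal_mul_diagonal,
      show (fun i => Shat i * Shinv i) = fun _ => (1:ℝ) from
        funext fun j => mul_inv_cancel₀ (hShne j),
      Matrix.diagonal_one, Matrix.mul_one]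
  have hPM2 : (U * Uᵀ) * M2 = M2 := by
    conv_lhs => rw [hM2repr]
    conv_rhs => rw [hM2repr]
    simp only [Matrix.mul_assoc]
    rw [← Matrix.mul_assoc Uᵀ U (Matrix.diagonal S * Uᵀ), hUtU, Matrix.one_mul]
  have hZ2M2 : (1 - U * Uᵀ) * M2 = 0 := by
    rw [Matrix.sub_mul, Matrix.one_mul, hPM2, sub_self]
  have hX2id : X2 = (1 - U * Uᵀ) * Em * N := by
    calc X2 = (1 - U * Uᵀ) * (M2hat * N) := by rw [hX2def, hM2hatN]
    _ = (1 - U * Uᵀ) * ((M2 + Em) * N) := by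
        rw [show M2 + Em = M2hat from by rw [hEmdef]; abel]
    _ = (1 - U * Uᵀ) * M2 * N + (1 - U * Uᵀ) * Em * N := by
        rw [Matrix.add_mul, Matrix.mul_add, ← Matrix.mul_assoc (1 - U * Uᵀ) M2 N,
          ← Matrix.mul_assoc (1 - U * Uᵀ) Em N]
    _ = (1 - U * Uᵀ) * Em * N := by rw [hZ2M2, Matrix.zero_mul, zero_add]
  have hspecX2 : spec X2 ≤ 3 / 2 * Err := by
    have h1 : spec X2 ≤ 1 * (Err * σ) * (2 / 3 * σ)⁻¹ := by
      rw [hX2id]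
      exact spec_mul_le_of_le (spec_mul_le_of_le hspecZ2 (le_of_eq hspecE) hEσ0) hspecN
        (inv_nonneg.mpr h23σ.le)
    have h2 : 1 * (Err * σ) * (2 / 3 * σ)⁻¹ = 3 / 2 * Err := by
      field_simp
    rw [h2] at h1
    exact h1
  have hX2Uhat : X2 * Uhat = (1 - U * Uᵀ) * Uhat := by
    rw [hX2def, Matrix.mul_assoc (1 - U * Uᵀ) (Uhat * Uhatᵀ) Uhat,
      Matrix.mul_assoc Uhat Uhatᵀ Uhat, hUhtUh, Matrix.mul_one]
  have hspecX2U : spec (X2 * Uhat) ≤ 3 / 2 * Err := by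
    calc spec (X2 * Uhat) ≤ (3 / 2 * Err) * 1 := spec_mul_le_of_le hspecX2 hspecUh zero_le_one
    _ = 3 / 2 * Err := by ring
  have hZ2sym : (1 - U * Uᵀ)ᵀ = 1 - U * Uᵀ := by
    rw [Matrix.transpose_sub, Matrix.transpose_one, Matrix.transpose_mul,
      Matrix.transpose_transpose]
  have hZ2idem : (1 - U * Uᵀ) * (1 - U * Uᵀ) = 1 - U * Uᵀ := by
    rw [Matrix.mul_sub, Matrix.mul_one, Matrix.sub_mul, Matrix.one_mul,
      show U * Uᵀ * (U * Uᵀ) = U * Uᵀ from by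
        rw [Matrix.mul_assoc U Uᵀ (U * Uᵀ), ← Matrix.mul_assoc Uᵀ U Uᵀ, hUtU, Matrix.one_mul]]
    abel
  have hUhtZ2Uh : (X2 * Uhat)ᵀ * (X2 * Uhat) = Uhatᵀ * (1 - U * Uᵀ) * Uhat := by
    rw [hX2Uhat, Matrix.transpose_mul, hZ2sym,
      Matrix.mul_assoc Uhatᵀ (1 - U * Uᵀ) ((1 - U * Uᵀ) * Uhat),
      ← Matrix.mul_assoc (1 - U * Uᵀ) (1 - U * Uᵀ) Uhat, hZ2idem, ← Matrix.mul_assoc]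
  have hGram2 : Uhatᵀ * (U * Uᵀ) * Uhat = 1 - (X2 * Uhat)ᵀ * (X2 * Uhat) := by
    rw [hUhtZ2Uh, Matrix.mul_sub, Matrix.mul_one, Matrix.sub_mul, hUhtUh, sub_sub_cancel]
  have hM2reprT : M2 = (Uᵀ)ᵀ * Matrix.diagonal S * Uᵀ := by
    rw [Matrix.transpose_transpose]
    exact hM2repr
  have hquadH3 : ∀ x : Fin k → ℝ, (σ * β) * (x ⬝ᵥ x)
      ≤ x ⬝ᵥ ((Uhatᵀ * M2 * Uhat) *ᵥ x) := by
    intro x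
    rw [dot_conj Uhat M2 x x]
    set w := Uhat *ᵥ x with hw
    have h1 : w ⬝ᵥ (M2 *ᵥ w) = (Uᵀ *ᵥ w) ⬝ᵥ (Matrix.diagonal S *ᵥ (Uᵀ *ᵥ w)) := by
      conv_lhs => rw [hM2reprT]
      rw [dot_conj Uᵀ (Matrix.diagonal S) w w]
    rw [h1]
    set z := Uᵀ *ᵥ w with hz
    have h2 : σ * (z ⬝ᵥ z) ≤ z ⬝ᵥ (Matrix.diagonal S *ᵥ z) := by
      rw [diagonal_mulVec_eq]
      exact dot_mul_ge (fun j => hSlow j)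
    have h3 : z ⬝ᵥ z = w ⬝ᵥ ((U * Uᵀ) *ᵥ w) := by
      rw [hz, dot_mulVec_self Uᵀ w w, Matrix.transpose_transpose]
    have h4 : x ⬝ᵥ ((Uhatᵀ * (U * Uᵀ) * Uhat) *ᵥ x) = w ⬝ᵥ ((U * Uᵀ) *ᵥ w) :=
      dot_conj Uhat (U * Uᵀ) x x
    have h5 : β * (x ⬝ᵥ x) ≤ x ⬝ᵥ ((Uhatᵀ * (U * Uᵀ) * Uhat) *ᵥ x) := by
      rw [hGram2, Matrix.sub_mulVec, Matrix.one_mulVec, dotProduct_sub,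
        ← dot_mulVec_self]
      have hb : ((X2 * Uhat) *ᵥ x) ⬝ᵥ ((X2 * Uhat) *ᵥ x) ≤ 9 / 4 * Err ^ 2 * (x ⬝ᵥ x) := by
        have hh2 : ‖ev ((X2 * Uhat) *ᵥ x)‖ ≤ (3 / 2 * Err) * ‖ev x‖ :=
          le_trans (norm_mulVec_le (X2 * Uhat) x)
            (mul_le_mul_of_nonneg_right hspecX2U (norm_nonneg _))
        have hh3 : ‖ev ((X2 * Uhat) *ᵥ x)‖ ^ 2 ≤ ((3 / 2 * Err) * ‖ev x‖) ^ 2 :=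
          pow_le_pow_left₀ (norm_nonneg _) hh2 2
        rw [norm_ev_sq] at hh3
        calc ((X2 * Uhat) *ᵥ x) ⬝ᵥ ((X2 * Uhat) *ᵥ x) ≤ ((3 / 2 * Err) * ‖ev x‖) ^ 2 := hh3
        _ = 9 / 4 * Err ^ 2 * ‖ev x‖ ^ 2 := by ring
        _ = 9 / 4 * Err ^ 2 * (x ⬝ᵥ x) := by rw [norm_ev_sq]
      rw [hβdef]
      linarith [dot_self_nonneg x]
    calc (σ * β) * (x ⬝ᵥ x) = σ * (β * (x ⬝ᵥ x)) := by ring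
    _ ≤ σ * (z ⬝ᵥ z) := by
        apply mul_le_mul_of_nonneg_left _ hσ.le
        rw [h3, ← h4]
        exact h5
    _ ≤ z ⬝ᵥ (Matrix.diagonal S *ᵥ z) := h2
  have hσβ0 : 0 ≤ σ * β := mul_nonneg hσ.le hβpos.le
  have hpart3a : (1 - 9 / 4 * Err ^ 2) * σ ≤ kthSV (Uhatᵀ * M2 * Uhat) k := by
    have h := kthSV_k_lower hk (Uhatᵀ * M2 * Uhat) (quad_to_normsq hσβ0 hquadH3)
    rw [Real.sqrt_sq hσβ0] at h
    calc (1 - 9 / 4 * Err ^ 2) * σ = σ * β := by rw [hβdef]; ring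
    _ ≤ kthSV (Uhatᵀ * M2 * Uhat) k := h
  have hpart3b : 0 < kthSV (Uhatᵀ * M2 * Uhat) k := by
    have h := kthSV_k_lower hk (Uhatᵀ * M2 * Uhat) (quad_to_normsq hσβ0 hquadH3)
    rw [Real.sqrt_sq hσβ0] at h
    exact lt_of_lt_of_le (mul_pos hσ hβpos) h
  exact ⟨⟨hpart1a, hdiagShat, hpart1c, hpart1d⟩, ⟨hpart2a, hpart2b⟩,
    ⟨hpart3a, hpart3b⟩, hspecX⟩
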